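/- Let X be a geodesic metric space that is δ-hyperbolic (every geodesic triangle is δ-thin), and let A and B be K-quasiconvex subsets of X, meaning every geodesic segment joining two points of the set lies in the closed K-neighborhood of the set. Suppose there exist points a, a' ∈ A and b, b' ∈ B with dist(a,b) ≤ L, dist(a',b') ≤ L, and dist(a,a') > 2L + 4δ. Then the infimal distance between A and B is at most 2K + 2δ; that is, there exist p ∈ A and q ∈ B with dist(p,q) ≤ 2K + 2δ. -/
import Mathlib


/-- `s` is a geodesic segment from `x` to `y`: the image of an isometric
embedding `γ : [0, dist x y] → X` with `γ 0 = x` and `γ (dist x y) = y`. -/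
def IsGeodesicSegment {X : Type*} [MetricSpace X] (x y : X) (s : Set X) : Prop :=
  ∃ γ : ℝ → X,
    (∀ a ∈ Set.Icc (0 : ℝ) (dist x y), ∀ b ∈ Set.Icc (0 : ℝ) (dist x y),
      dist (γ a) (γ b) = |a - b|) ∧
    γ 0 = x ∧ γ (dist x y) = y ∧ s = γ '' Set.Icc 0 (dist x y)

/-- `X` is a geodesic metric space: any two points are joined by a geodesic segment. -/
def GeodesicSpace (X : Type*) [MetricSpace X] : Prop :=
  ∀ x y : X, ∃ s : Set X, IsGeodesicSegment x y s

/-- `X` is `δ`-hyperbolic: every geodesic triangle is `δ`-thin, i.e. each side is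
contained in the closed `δ`-neighborhood of the union of the other two sides. -/
def DeltaHyperbolic (X : Type*) [MetricSpace X] (δ : ℝ) : Prop :=
  ∀ x y z : X, ∀ s t u : Set X,
    IsGeodesicSegment x y s → IsGeodesicSegment y z t → IsGeodesicSegment z x u →
    ∀ p ∈ s, ∃ q ∈ t ∪ u, dist p q ≤ δ

/-- `A` is `K`-quasiconvex: every geodesic segment joining two points of `A` lies
in the closed `K`-neighborhood of `A`. -/
def Quasiconvex {X : Type*} [MetricSpace X] (K : ℝ) (A : Set X) : Prop :=
  ∀ x ∈ A, ∀ y ∈ A, ∀ s : Set X, IsGeodesicSegment x y s →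
    ∀ p ∈ s, ∃ q ∈ A, dist p q ≤ K


lemma seg_left_mem {X : Type*} [MetricSpace X] {x y : X} {s : Set X}
    (h : IsGeodesicSegment x y s) : x ∈ s := by
  obtain ⟨γ, hiso, h0, hd, rfl⟩ := h
  exact ⟨0, ⟨le_refl _, dist_nonneg⟩, h0⟩

lemma dist_le_of_mem_seg {X : Type*} [MetricSpace X] {x y : X} {s : Set X}
    (h : IsGeodesicSegment x y s) {p : X} (hp : p ∈ s) :
    dist p x ≤ dist x y ∧ dist p y ≤ dist x y := by
  obtain ⟨γ, hiso, h0, hd, rfl⟩ := h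
  obtain ⟨t, ht, rfl⟩ := hp
  have h0m : (0:ℝ) ∈ Set.Icc 0 (dist x y) := ⟨le_refl _, dist_nonneg⟩
  have hdm : dist x y ∈ Set.Icc (0:ℝ) (dist x y) := ⟨dist_nonneg, le_refl _⟩
  have e1 : dist (γ t) x = |t - 0| := by rw [← h0]; exact hiso t ht 0 h0m
  have e2 : dist (γ t) y = |t - dist x y| := by
    conv_lhs => rw [← hd]
    exact hiso t ht _ hdm
  rw [e1, e2, abs_of_nonneg (by linarith [ht.1]), abs_of_nonpos (by linarith [ht.2])]
  constructor <;> linarith [ht.1, ht.2]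

theorem quasiconvex_sets_close {X : Type*} [MetricSpace X] (δ K L : ℝ)
    (hgeo : GeodesicSpace X) (hhyp : DeltaHyperbolic X δ)
    (A B : Set X) (hA : Quasiconvex K A) (hB : Quasiconvex K B)
    (a a' b b' : X) (haA : a ∈ A) (ha'A : a' ∈ A) (hbB : b ∈ B) (hb'B : b' ∈ B)
    (hab : dist a b ≤ L) (hab' : dist a' b' ≤ L) (hfar : dist a a' > 2 * L + 4 * δ) :
    ∃ p ∈ A, ∃ q ∈ B, dist p q ≤ 2 * K + 2 * δ := by
  -- δ ≥ 0
  obtain ⟨s0, hs0⟩ := hgeo a a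
  obtain ⟨q0, _, hq0⟩ := hhyp a a a s0 s0 s0 hs0 hs0 hs0 a (seg_left_mem hs0)
  have hδ : 0 ≤ δ := le_trans dist_nonneg hq0
  -- segments
  obtain ⟨saa, hsaa⟩ := hgeo a a'
  obtain ⟨sa'b', hsa'b'⟩ := hgeo a' b'
  obtain ⟨sb'a, hsb'a⟩ := hgeo b' a
  obtain ⟨sab, hsab⟩ := hgeo a b
  obtain ⟨sbb', hsbb'⟩ := hgeo b b'
  -- the midpoint m of [a, a']
  obtain ⟨γ, hiso, h0, hd, hset⟩ := hsaa
  have hsaa' : IsGeodesicSegment a a' saa := ⟨γ, hiso, h0, hd, hset⟩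
  set d := dist a a' with hdef
  have hd0 : 0 ≤ d := dist_nonneg
  have hhalf : d / 2 ∈ Set.Icc (0:ℝ) d := ⟨by linarith, by linarith⟩
  have h0m : (0:ℝ) ∈ Set.Icc 0 d := ⟨le_refl _, hd0⟩
  have hdm : d ∈ Set.Icc (0:ℝ) d := ⟨hd0, le_refl _⟩
  set m := γ (d / 2) with hmdef
  have hm : m ∈ saa := by rw [hset]; exact ⟨d / 2, hhalf, rfl⟩
  have hma : dist m a = d / 2 := by
    rw [hmdef, ← h0, hiso _ hhalf 0 h0m, abs_of_nonneg (by linarith)]; ring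
  have hma' : dist m a' = d / 2 := by
    rw [hmdef, ← hd, hiso _ hhalf d hdm, abs_of_nonpos (by linarith)]; ring
  -- triangle a a' b'
  obtain ⟨p, hp, hmp⟩ := hhyp a a' b' saa sa'b' sb'a hsaa' hsa'b' hsb'a m hm
  rcases hp with hp | hp
  · -- p ∈ [a', b'] : contradiction
    exfalso
    have h1 : dist p a' ≤ dist a' b' := (dist_le_of_mem_seg hsa'b' hp).1
    have h2 : dist m a' ≤ dist m p + dist p a' := dist_triangle m p a'
    linarith
  · -- p ∈ [b', a] : second triangle b' a b
    obtain ⟨q, hq, hpq⟩ := hhyp b' a b sb'a sab sbb' hsb'a hsab hsbb' p hp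
    rcases hq with hq | hq
    · -- q ∈ [a, b] : contradiction
      exfalso
      have h1 : dist q a ≤ dist a b := (dist_le_of_mem_seg hsab hq).1
      have h2 : dist m a ≤ dist m p + dist p q + dist q a := dist_triangle4 m p q a
      linarith
    · -- q ∈ [b, b'] : done
      obtain ⟨r, hrB, hqr⟩ := hB b hbB b' hb'B sbb' hsbb' q hq
      obtain ⟨w, hwA, hmw⟩ := hA a haA a' ha'A saa hsaa' m hm
      refine ⟨w, hwA, r, hrB, ?_⟩
      have h1 : dist w r ≤ dist w m + dist m q + dist q r := dist_triangle4 w m q r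
      have h2 : dist m q ≤ dist m p + dist p q := dist_triangle m p q
      have h3 : dist w m = dist m w := dist_comm w m
      linarith
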